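/- Let G be a real p×s matrix and r ≤ s with rank(G) ≤ r. Then the infimum of ‖G V‖₁ over {V ∈ ℝ^{s×r} : Vᵀ V = I_r, ‖G V‖_F = ‖G‖_F} equals the infimum of ‖U‖₁ over {(U, V) ∈ ℝ^{p×r} × ℝ^{s×r} : G = U Vᵀ, Vᵀ V = I_r}; moreover both feasible sets are nonempty, so the common value S_{E-TV}(G) is well defined. -/

import Mathlib

open Matrix BigOperators

/-- The Frobenius norm of a real matrix, `‖M‖_F = sqrt (trace (Mᵀ M))`. -/
noncomputable def frobNorm {p q : ℕ} (M : Matrix (Fin p) (Fin q) ℝ) : ℝ :=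
  Real.sqrt ((Mᵀ * M).trace)

/-- The entrywise ℓ₁ norm of a real matrix. -/
def l1Norm {p q : ℕ} (M : Matrix (Fin p) (Fin q) ℝ) : ℝ :=
  ∑ i, ∑ j, |M i j|

lemma trace_transpose_mul_self {p q : ℕ} (M : Matrix (Fin p) (Fin q) ℝ) :
    (Mᵀ * M).trace = ∑ i, ∑ j, (M i j)^2 := by
  rw [Finset.sum_comm]
  simp [Matrix.trace, Matrix.mul_apply, Matrix.diag, sq]

lemma trace_transpose_mul_self_nonneg {p q : ℕ} (M : Matrix (Fin p) (Fin q) ℝ) :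
    0 ≤ (Mᵀ * M).trace := by
  rw [trace_transpose_mul_self]; positivity

lemma eq_zero_of_trace_transpose_mul_self {p q : ℕ} (M : Matrix (Fin p) (Fin q) ℝ)
    (h : (Mᵀ * M).trace = 0) : M = 0 := by
  rw [trace_transpose_mul_self] at h
  ext i j
  have h1 := (Finset.sum_eq_zero_iff_of_nonneg
    (fun i _ => Finset.sum_nonneg fun j _ => sq_nonneg (M i j))).mp h i (Finset.mem_univ i)
  have h2 := (Finset.sum_eq_zero_iff_of_nonneg
    (fun j _ => sq_nonneg (M i j))).mp h1 j (Finset.mem_univ j)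
  simpa using pow_eq_zero_iff (n := 2) (by norm_num) |>.mp h2

lemma frob_of_proj {p s r : ℕ} (G : Matrix (Fin p) (Fin s) ℝ) (V : Matrix (Fin s) (Fin r) ℝ)
    (hproj : G * V * Vᵀ = G) : frobNorm (G * V) = frobNorm G := by
  unfold frobNorm
  congr 1
  calc ((G * V)ᵀ * (G * V)).trace = (Vᵀ * (Gᵀ * (G * V))).trace := by
        rw [Matrix.transpose_mul, Matrix.mul_assoc]
    _ = ((Gᵀ * (G * V)) * Vᵀ).trace := Matrix.trace_mul_comm _ _
    _ = (Gᵀ * G).trace := by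
        rw [show Gᵀ * (G * V) * Vᵀ = Gᵀ * (G * V * Vᵀ) by rw [Matrix.mul_assoc], hproj]

lemma recover {p s r : ℕ} (G : Matrix (Fin p) (Fin s) ℝ) (V : Matrix (Fin s) (Fin r) ℝ)
    (hV : Vᵀ * V = 1) (hf : frobNorm (G * V) = frobNorm G) : G * V * Vᵀ = G := by
  have ha : ((G * V)ᵀ * (G * V)).trace = (Gᵀ * G).trace :=
    (Real.sqrt_inj (trace_transpose_mul_self_nonneg _) (trace_transpose_mul_self_nonneg _)).mp hf
  have c1 : ((V * Vᵀ) * (Gᵀ * G) * (V * Vᵀ)).trace = ((G * V)ᵀ * (G * V)).trace := by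
    rw [show (V * Vᵀ) * (Gᵀ * G) * (V * Vᵀ) = (V * (Vᵀ * Gᵀ)) * ((G * V) * Vᵀ) by simp only [Matrix.mul_assoc],
      Matrix.trace_mul_comm,
      show ((G * V) * Vᵀ) * (V * (Vᵀ * Gᵀ)) = (G * V) * (Vᵀ * V) * (Vᵀ * Gᵀ) by simp only [Matrix.mul_assoc],
      hV, Matrix.mul_one, Matrix.trace_mul_comm, Matrix.transpose_mul]
  have c2 : ((V * Vᵀ) * (Gᵀ * G)).trace = ((G * V)ᵀ * (G * V)).trace := by
    rw [Matrix.trace_mul_comm,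
      show (Gᵀ * G) * (V * Vᵀ) = (Gᵀ * (G * V)) * Vᵀ by simp only [Matrix.mul_assoc],
      Matrix.trace_mul_comm,
      show Vᵀ * (Gᵀ * (G * V)) = (Vᵀ * Gᵀ) * (G * V) by simp only [Matrix.mul_assoc],
      Matrix.transpose_mul]
  have c3 : ((Gᵀ * G) * (V * Vᵀ)).trace = ((G * V)ᵀ * (G * V)).trace := by
    rw [← Matrix.trace_mul_comm]; exact c2
  have expand : (G * V * Vᵀ - G)ᵀ * (G * V * Vᵀ - G) =
      (V * Vᵀ) * (Gᵀ * G) * (V * Vᵀ) - (V * Vᵀ) * (Gᵀ * G) - (Gᵀ * G) * (V * Vᵀ) + Gᵀ * G := by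
    simp only [Matrix.transpose_sub, Matrix.transpose_mul, Matrix.sub_mul, Matrix.mul_sub,
      Matrix.transpose_transpose, Matrix.mul_assoc]
    abel
  have hT : ((G * V * Vᵀ - G)ᵀ * (G * V * Vᵀ - G)).trace = 0 := by
    rw [expand, Matrix.trace_add, Matrix.trace_sub, Matrix.trace_sub, c1, c2, c3, ha]
    ring
  have := eq_zero_of_trace_transpose_mul_self _ hT
  exact sub_eq_zero.mp this

open scoped RealInnerProductSpace in
lemma exists_good_V {p s r : ℕ} (hrs : r ≤ s) (G : Matrix (Fin p) (Fin s) ℝ)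
    (hrank : G.rank ≤ r) :
    ∃ V : Matrix (Fin s) (Fin r) ℝ, Vᵀ * V = 1 ∧ G * V * Vᵀ = G := by
  classical
  set E := EuclideanSpace ℝ (Fin s) with hE
  let e : (Fin s → ℝ) ≃ₗ[ℝ] E := (WithLp.linearEquiv 2 ℝ (Fin s → ℝ)).symm
  let g : Fin p → E := fun i => e (G i)
  let W : Submodule ℝ E := Submodule.span ℝ (Set.range g)
  have hWr : Module.finrank ℝ W ≤ r := by
    have h1 : W = Submodule.map (e : (Fin s → ℝ) →ₗ[ℝ] E) (Submodule.span ℝ (Set.range G.row)) := by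
      rw [Submodule.map_span, ← Set.range_comp]
      rfl
    rw [h1, LinearEquiv.finrank_map_eq, ← Matrix.rank_eq_finrank_span_row]
    exact hrank
  set k := Module.finrank ℝ W with hk
  let c : OrthonormalBasis (Fin k) ℝ W := stdOrthonormalBasis ℝ W
  let v : Fin s → E := fun i => if h : (i : ℕ) < k then (c ⟨i, h⟩ : E) else 0
  have hvon : Orthonormal ℝ (Set.restrict {i : Fin s | (i : ℕ) < k} v) := by
    rw [orthonormal_iff_ite]
    rintro ⟨i, hi⟩ ⟨j, hj⟩
    have hi' : (i : ℕ) < k := hi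
    have hj' : (j : ℕ) < k := hj
    show ⟪v i, v j⟫ = _
    simp only [v, dif_pos hi', dif_pos hj']
    rw [← Submodule.coe_inner, orthonormal_iff_ite.mp c.orthonormal]
    by_cases hij : i = j
    · subst hij; simp
    · rw [if_neg (by simpa [Fin.ext_iff] using hij), if_neg (by simpa [Subtype.ext_iff] using hij)]
  obtain ⟨b, hb⟩ := hvon.exists_orthonormalBasis_extension_of_card_eq
    (by
      show Module.finrank ℝ (EuclideanSpace ℝ (Fin s)) = Fintype.card (Fin s)
      simp [finrank_euclideanSpace])
  let V : Matrix (Fin s) (Fin r) ℝ := Matrix.of fun j t => b (Fin.castLE hrs t) j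
  have hVV : Vᵀ * V = 1 := by
    ext t t'
    have := orthonormal_iff_ite.mp b.orthonormal (Fin.castLE hrs t) (Fin.castLE hrs t')
    rw [PiLp.inner_apply] at this
    simp only [RCLike.inner_apply, conj_trivial] at this
    simp only [Matrix.mul_apply, Matrix.one_apply, Matrix.transpose_apply, V, Matrix.of_apply]
    simp_rw [mul_comm ((b (Fin.castLE hrs t')).ofLp _)] at this
    rw [this]
    by_cases h : t = t'
    · simp [h]
    · rw [if_neg (fun hc => h (Fin.castLE_injective hrs hc)), if_neg h]
  refine ⟨V, hVV, ?_⟩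
  -- key: each row of G is recovered
  have key : ∀ i : Fin p, ∀ j : Fin s,
      (∑ t : Fin r, (⟪b (Fin.castLE hrs t), g i⟫ • b (Fin.castLE hrs t) : E)) j = G i j := by
    intro i j
    have hgiW : g i ∈ W := Submodule.subset_span (Set.mem_range_self i)
    -- inner products with b t vanish for t outside the image of castLE
    have hz : ∀ t : Fin s, r ≤ (t : ℕ) → ⟪b t, g i⟫ = 0 := by
      intro t ht
      set w : W := ⟨g i, hgiW⟩ with hw
      have hsum : (∑ u : Fin k, c.repr w u • (c u : E)) = g i := by
        have := c.sum_repr w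
        calc (∑ u : Fin k, c.repr w u • (c u : E)) = ((∑ u : Fin k, c.repr w u • c u : W) : E) := by
              push_cast [Submodule.coe_sum]
              rfl
          _ = g i := by rw [this]
      rw [← hsum, inner_sum]
      refine Finset.sum_eq_zero fun u _ => ?_
      have hu : ((⟨(u : ℕ), lt_of_lt_of_le u.2 (hWr.trans hrs)⟩ : Fin s) : ℕ) < k := u.2
      have hcu : (c u : E) = b ⟨(u : ℕ), lt_of_lt_of_le u.2 (hWr.trans hrs)⟩ := by
        rw [hb _ hu]
        simp only [v, dif_pos hu]
      rw [inner_smul_right, hcu, orthonormal_iff_ite.mp b.orthonormal,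
        if_neg (by
          intro hc
          have : (t : ℕ) = (u : ℕ) := by simpa [Fin.ext_iff] using hc
          omega)]
      ring
    -- full expansion and restriction of the sum
    have hfull := b.sum_repr' (g i)
    have hsplit : (∑ t : Fin s, (⟪b t, g i⟫ • b t : E)) =
        ∑ t : Fin r, (⟪b (Fin.castLE hrs t), g i⟫ • b (Fin.castLE hrs t) : E) :=
      calc (∑ t : Fin s, (⟪b t, g i⟫ • b t : E))
          = ∑ t ∈ Finset.univ.image (Fin.castLE hrs), (⟪b t, g i⟫ • b t : E) := by
            symm
            apply Finset.sum_subset (Finset.subset_univ _)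
            intro t _ ht
            have htr : r ≤ (t : ℕ) := by
              by_contra hlt
              push_neg at hlt
              exact ht (Finset.mem_image.mpr ⟨⟨(t : ℕ), hlt⟩, Finset.mem_univ _, Fin.ext rfl⟩)
            rw [hz t htr, zero_smul]
        _ = ∑ t : Fin r, (⟪b (Fin.castLE hrs t), g i⟫ • b (Fin.castLE hrs t) : E) :=
            Finset.sum_image (fun x _ y _ h => Fin.castLE_injective hrs h)
    rw [← hsplit, hfull]
    rfl
  ext i j
  have hinner : ∀ t : Fin r, ⟪b (Fin.castLE hrs t), g i⟫ = (G * V) i t := by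
    intro t
    rw [PiLp.inner_apply]
    simp only [RCLike.inner_apply, conj_trivial]
    simp only [Matrix.mul_apply, V, Matrix.of_apply]
    exact Finset.sum_congr rfl fun x _ => by
      show G i x * b (Fin.castLE hrs t) x = G i x * b (Fin.castLE hrs t) x
      ring
  have := key i j
  simp only [hinner] at this
  rw [← this]
  simp only [Matrix.mul_apply, Matrix.transpose_apply, V, Matrix.of_apply]
  rw [WithLp.ofLp_sum, Finset.sum_apply]
  exact Finset.sum_congr rfl fun t _ => by
    show ((G * V) i t • b (Fin.castLE hrs t) : E) j = (G * V) i t * b (Fin.castLE hrs t) j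
    rfl

/-- Theorem 2 of the paper (on the level of optimal values): for `G` of rank at most
`r ≤ s`, the infimum of `‖G V‖₁` over `F₁ = {V : Vᵀ V = I, ‖G V‖_F = ‖G‖_F}` equals the
infimum of `‖U‖₁` over `F₂ = {(U,V) : G = U Vᵀ, Vᵀ V = I}`, and both feasible sets are
nonempty, so the common value `S_{E-TV}(G)` is well defined. -/
theorem inf_F1_eq_inf_F2 {p s r : ℕ} (hrs : r ≤ s)
    (G : Matrix (Fin p) (Fin s) ℝ) (hrank : G.rank ≤ r) :
    sInf {x : ℝ | ∃ V : Matrix (Fin s) (Fin r) ℝ,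
        Vᵀ * V = 1 ∧ frobNorm (G * V) = frobNorm G ∧ x = l1Norm (G * V)} =
      sInf {x : ℝ | ∃ (U : Matrix (Fin p) (Fin r) ℝ) (V : Matrix (Fin s) (Fin r) ℝ),
        G = U * Vᵀ ∧ Vᵀ * V = 1 ∧ x = l1Norm U} ∧
    {x : ℝ | ∃ V : Matrix (Fin s) (Fin r) ℝ,
        Vᵀ * V = 1 ∧ frobNorm (G * V) = frobNorm G ∧ x = l1Norm (G * V)}.Nonempty ∧
    {x : ℝ | ∃ (U : Matrix (Fin p) (Fin r) ℝ) (V : Matrix (Fin s) (Fin r) ℝ),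
        G = U * Vᵀ ∧ Vᵀ * V = 1 ∧ x = l1Norm U}.Nonempty := by
  obtain ⟨V₀, hV₀, hproj₀⟩ := exists_good_V hrs G hrank
  have hsets : {x : ℝ | ∃ V : Matrix (Fin s) (Fin r) ℝ,
        Vᵀ * V = 1 ∧ frobNorm (G * V) = frobNorm G ∧ x = l1Norm (G * V)} =
      {x : ℝ | ∃ (U : Matrix (Fin p) (Fin r) ℝ) (V : Matrix (Fin s) (Fin r) ℝ),
        G = U * Vᵀ ∧ Vᵀ * V = 1 ∧ x = l1Norm U} := by
    ext x
    constructor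
    · rintro ⟨V, hV, hf, hx⟩
      exact ⟨G * V, V, (recover G V hV hf).symm, hV, hx⟩
    · rintro ⟨U, V, hG, hV, hx⟩
      have hGV : G * V = U := by rw [hG, Matrix.mul_assoc, hV, Matrix.mul_one]
      have hproj : G * V * Vᵀ = G := by rw [hGV, hG]
      exact ⟨V, hV, frob_of_proj G V hproj, by rw [hx, hGV]⟩
  refine ⟨by rw [hsets], ⟨l1Norm (G * V₀), V₀, hV₀, frob_of_proj G V₀ hproj₀, rfl⟩,
    ⟨l1Norm (G * V₀), G * V₀, V₀, hproj₀.symm, hV₀, rfl⟩⟩
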